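/- Let n ≥ 1 and let Π be a real symmetric 2n×2n matrix, written in blocks as Π = [[Π₁₁, Π₁₂],[Π₁₂ᵀ, Π₂₂]] with each block n×n. Suppose there exists ε > 0 such that Π₂₂ − εI is positive semidefinite and Π₁₁ + εI is negative semidefinite (Π is positive-negative). Then Π admits a J-spectral factorization: there exists an invertible real 2n×2n matrix Ψ such that Π = Ψᵀ J Ψ, where J := [[Iₙ, 0],[0, −Iₙ]]. -/

import Mathlib

open Matrix

/-- A positive-negative real symmetric block matrix `Π = [[Π₁₁,Π₁₂],[Π₁₂ᵀ,Π₂₂]]`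
(there is `ε > 0` with `Π₂₂ - εI ⪰ 0` and `Π₁₁ + εI ⪯ 0`) admits a J-spectral
factorization `Π = Ψᵀ J Ψ` with `Ψ` invertible and `J = [[Iₙ,0],[0,-Iₙ]]`. -/
theorem stmt17 {n : ℕ} (hn : 1 ≤ n)
    (P11 P12 P22 : Matrix (Fin n) (Fin n) ℝ)
    (h11 : P11.IsSymm) (h22 : P22.IsSymm)
    (hpn : ∃ ε > (0 : ℝ), (P22 - ε • (1 : Matrix (Fin n) (Fin n) ℝ)).PosSemidef ∧
      (-(P11 + ε • (1 : Matrix (Fin n) (Fin n) ℝ))).PosSemidef) :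
    ∃ Ψ : Matrix (Fin n ⊕ Fin n) (Fin n ⊕ Fin n) ℝ, IsUnit Ψ ∧
      Matrix.fromBlocks P11 P12 P12ᵀ P22 =
        Ψᵀ * Matrix.fromBlocks (1 : Matrix (Fin n) (Fin n) ℝ) 0 0
          (-(1 : Matrix (Fin n) (Fin n) ℝ)) * Ψ := by
  obtain ⟨ε, hε, hP22, hP11⟩ := hpn
  have hεpd : (ε • (1 : Matrix (Fin n) (Fin n) ℝ)).PosDef := by
    rw [smul_one_eq_diagonal]
    exact posDef_diagonal_iff.mpr fun _ => hε
  set N : Matrix (Fin n) (Fin n) ℝ := -P11 with hNdef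
  have hNpd : N.PosDef := by
    have := Matrix.PosDef.posSemidef_add hP11 hεpd
    have hEq : -(P11 + ε • (1 : Matrix (Fin n) (Fin n) ℝ)) + ε • 1 = N := by
      simp [hNdef]
    rwa [hEq] at this
  have hP22pd : P22.PosDef := by
    have := Matrix.PosDef.posSemidef_add hP22 hεpd
    have hEq : P22 - ε • (1 : Matrix (Fin n) (Fin n) ℝ) + ε • 1 = P22 := by
      abel
    rwa [hEq] at this
  have hNinv : N⁻¹.PosDef := hNpd.inv
  have hNunit : IsUnit N := hNpd.isUnit
  -- Schur complement
  set S : Matrix (Fin n) (Fin n) ℝ := P22 + P12ᵀ * N⁻¹ * P12 with hSdef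
  have hSpd : S.PosDef := by
    have hpsd : (P12ᴴ * N⁻¹ * P12).PosSemidef :=
      hNinv.posSemidef.conjTranspose_mul_mul_same P12
    rw [conjTranspose_eq_transpose_of_trivial] at hpsd
    exact hP22pd.add_posSemidef hpsd
  -- square roots
  set A : Matrix (Fin n) (Fin n) ℝ := (open scoped MatrixOrder in CFC.sqrt N) with hAdef
  set B : Matrix (Fin n) (Fin n) ℝ := (open scoped MatrixOrder in CFC.sqrt S) with hBdef
  have hAA : A * A = N := open scoped MatrixOrder in CFC.sqrt_mul_sqrt_self N hNpd.posSemidef.nonneg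
  have hBB : B * B = S := open scoped MatrixOrder in CFC.sqrt_mul_sqrt_self S hSpd.posSemidef.nonneg
  have hAsymm : Aᵀ = A := by
    have := open scoped MatrixOrder in (CFC.sqrt_nonneg N).posSemidef.isHermitian
    rwa [IsHermitian, conjTranspose_eq_transpose_of_trivial] at this
  have hBsymm : Bᵀ = B := by
    have := open scoped MatrixOrder in (CFC.sqrt_nonneg S).posSemidef.isHermitian
    rwa [IsHermitian, conjTranspose_eq_transpose_of_trivial] at this
  have hAunit : IsUnit A := by
    have hdet : A.det * A.det = N.det := by rw [← det_mul, hAA]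
    rw [isUnit_iff_isUnit_det]
    have : N.det ≠ 0 := hNpd.det_pos.ne'
    exact isUnit_iff_ne_zero.mpr fun h => this (by rw [← hdet, h, zero_mul])
  have hBunit : IsUnit B := by
    have hdet : B.det * B.det = S.det := by rw [← det_mul, hBB]
    rw [isUnit_iff_isUnit_det]
    have : S.det ≠ 0 := hSpd.det_pos.ne'
    exact isUnit_iff_ne_zero.mpr fun h => this (by rw [← hdet, h, zero_mul])
  have hNsymm : Nᵀ = N := by
    have := hNpd.isHermitian
    rwa [IsHermitian, conjTranspose_eq_transpose_of_trivial] at this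
  have hNinvsymm : (N⁻¹)ᵀ = N⁻¹ := by rw [transpose_nonsing_inv, hNsymm]
  set X : Matrix (Fin n) (Fin n) ℝ := -(N⁻¹ * P12) with hXdef
  set M : Matrix (Fin n ⊕ Fin n) (Fin n ⊕ Fin n) ℝ := fromBlocks 0 B A 0 with hMdef
  set L : Matrix (Fin n ⊕ Fin n) (Fin n ⊕ Fin n) ℝ := fromBlocks 1 X 0 1 with hLdef
  have hMunit : IsUnit M := by
    obtain ⟨A', hA'⟩ := hAunit.exists_right_inv
    obtain ⟨B', hB'⟩ := hBunit.exists_right_inv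
    have : M * fromBlocks 0 A' B' 0 = 1 := by
      rw [hMdef, fromBlocks_multiply]
      simp [hA', hB', fromBlocks_one]
    exact @isUnit_of_invertible _ _ _ (invertibleOfRightInverse _ _ this)
  have hLunit : IsUnit L := by
    have : L * fromBlocks 1 (-X) 0 1 = 1 := by
      rw [hLdef, fromBlocks_multiply]
      simp [fromBlocks_one]
    exact @isUnit_of_invertible _ _ _ (invertibleOfRightInverse _ _ this)
  refine ⟨M * L, hMunit.mul hLunit, ?_⟩
  have hNX : N * X = -P12 := by
    rw [hXdef, mul_neg, ← Matrix.mul_assoc, Matrix.mul_nonsing_inv _ hNpd.det_pos.ne'.isUnit, Matrix.one_mul]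
  have hXt : Xᵀ = -(P12ᵀ * N⁻¹) := by
    rw [hXdef, transpose_neg, transpose_mul, hNinvsymm]
  rw [transpose_mul, Matrix.mul_assoc, Matrix.mul_assoc]
  rw [show fromBlocks (1 : Matrix (Fin n) (Fin n) ℝ) 0 0 (-1) * (M * L)
      = fromBlocks 0 B (-A) 0 * L by
    rw [← Matrix.mul_assoc, hMdef, fromBlocks_multiply]
    simp]
  rw [hMdef, hLdef, fromBlocks_transpose, fromBlocks_transpose, fromBlocks_multiply,
    fromBlocks_multiply, fromBlocks_multiply]
  simp only [transpose_zero, transpose_one, hAsymm, hBsymm, hXt,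
    Matrix.mul_zero, Matrix.zero_mul, Matrix.mul_one, Matrix.one_mul,
    Matrix.mul_neg, Matrix.neg_mul, add_zero, zero_add, neg_neg]
  rw [← Matrix.mul_assoc A A X, hAA, hNX, hBB,
    Matrix.mul_assoc P12ᵀ N⁻¹ N, Matrix.nonsing_inv_mul _ hNpd.det_pos.ne'.isUnit,
    Matrix.mul_one]
  simp only [Matrix.mul_neg, neg_neg, neg_zero, add_zero]
  have hbr : -(P12ᵀ * N⁻¹ * P12) + S = P22 := by rw [hSdef]; abel
  rw [hbr, hNdef, neg_neg]
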